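/- For a ∈ [0,1) and ε ∈ (0,1), the function F_{a,ε}(z,w) := F_a(z,w)/√(1 − (ε²/(2−a²)²)(a²w − bz²)²), where F_a(z,w) = (z² + 2√(1−a²)·w)/(2 − a²) and b = √(1−a²), maps the open unit ball 𝔹² ⊂ ℂ² holomorphically into the open unit disc 𝔻. -/

import Mathlib

/-- The open unit Euclidean ball in ℂ². -/
def unitBall2 : Set (ℂ × ℂ) := {p | ‖p.1‖ ^ 2 + ‖p.2‖ ^ 2 < 1}

lemma key_real (c b x t e : ℝ) (hc0 : 0 ≤ c) (hc1 : c < 1) (hb0 : 0 ≤ b)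
    (hb2 : b^2 = 1 - c) (hx : 0 ≤ x) (ht : 0 ≤ t) (hxt : x + t^2 < 1)
    (he0 : 0 ≤ e) (he1 : e ≤ 1) :
    (x+2*b*t)^2*(1-e*c/2) + e*(2-c)*(x^2+2*c*t^2)/2 < (2-c)^2 := by
  have h0 : x + 2*b*t < 2 - c := by nlinarith [sq_nonneg (b - t)]
  have hnn : 0 ≤ x + 2*b*t := by positivity
  have L0 : (x+2*b*t)^2 < (2-c)^2 := by nlinarith
  have L1 : (x+2*b*t)^2 + x^2 + 2*c*t^2 < 2*(2-c) := by
    nlinarith [mul_le_mul_of_nonneg_left h0.le hx]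
  have L1' : (x+2*b*t)^2*(1-c/2) + (2-c)*(x^2+2*c*t^2)/2 < (2-c)^2 := by
    nlinarith [L1, hc1]
  rcases eq_or_lt_of_le he0 with h | h
  · rw [← h]; nlinarith [L0]
  · have h1 := mul_lt_mul_of_pos_left L1' h
    have h2 := mul_le_mul_of_nonneg_left L0.le (sub_nonneg.2 he1)
    nlinarith [h1, h2]

lemma ident (b c : ℝ) (hb2 : b^2 = 1-c) (z w : ℂ) :
    Complex.normSq ((c:ℂ)*w - (b:ℂ)*z^2) =
      (2-c)/2 * ((Complex.normSq z)^2 + 2*c*Complex.normSq w)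
        - c/2 * Complex.normSq (z^2 + 2*(b:ℂ)*w) := by
  simp only [Complex.normSq_apply, pow_two, Complex.mul_re, Complex.mul_im,
    Complex.add_re, Complex.add_im, Complex.sub_re, Complex.sub_im,
    Complex.ofReal_re, Complex.ofReal_im, Complex.re_ofNat, Complex.im_ofNat]
  linear_combination ((z.re*z.re+z.im*z.im)^2 + 2*c*(w.re*w.re+w.im*w.im)) * hb2

lemma key_bound (a ε b : ℝ) (ha0 : 0 ≤ a) (ha1 : a < 1) (hε0 : 0 < ε) (hε1 : ε < 1)
    (hb0 : 0 ≤ b) (hb2 : b^2 = 1 - a^2) (z w : ℂ)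
    (hzw : ‖z‖ ^ 2 + ‖w‖ ^ 2 < 1) :
    (‖z^2 + 2*(b:ℂ)*w‖)^2
      + ε^2 * (‖(a:ℂ)^2*w - (b:ℂ)*z^2‖)^2 < (2 - a^2)^2 := by
  set s := ‖z‖ with hs
  set t := ‖w‖ with ht
  set N := ‖z^2 + 2*(b:ℂ)*w‖ with hN
  set D := ‖(a:ℂ)^2*w - (b:ℂ)*z^2‖ with hD
  have hc0 : 0 ≤ a^2 := sq_nonneg a
  have hc1 : a^2 < 1 := by nlinarith
  have hD2 : D^2 = (2-a^2)/2 * ((s^2)^2 + 2*a^2*t^2) - a^2/2 * N^2 := by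
    have h := ident b (a^2) hb2 z w
    push_cast at h
    simpa [← Complex.sq_norm, ← hs, ← ht, ← hN, ← hD] using h
  have hNle : N ≤ s^2 + 2*b*t := by
    calc N ≤ ‖z^2‖ + ‖2*(b:ℂ)*w‖ := norm_add_le _ _
    _ = s^2 + 2*b*t := by
        rw [norm_pow, norm_mul, norm_mul, Complex.norm_two, Complex.norm_real, Real.norm_eq_abs,
          abs_of_nonneg hb0]
  have hN0 : 0 ≤ N := norm_nonneg _
  have hcoef : 0 ≤ 1 - ε^2*a^2/2 := by nlinarith
  have hkey := key_real (a^2) b (s^2) t (ε^2) hc0 hc1 hb0 hb2 (by positivity)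
    (norm_nonneg _) hzw (by positivity) (by nlinarith)
  have hNsq : N^2 ≤ (s^2+2*b*t)^2 := by nlinarith
  calc N^2 + ε^2*D^2 = N^2*(1-ε^2*a^2/2) + ε^2*(2-a^2)*((s^2)^2+2*a^2*t^2)/2 := by
        rw [hD2]; ring
    _ ≤ (s^2+2*b*t)^2*(1-ε^2*a^2/2) + ε^2*(2-a^2)*((s^2)^2+2*a^2*t^2)/2 := by
        nlinarith [mul_le_mul_of_nonneg_right hNsq hcoef]
    _ < (2-a^2)^2 := hkey

theorem stmt5 (a ε : ℝ) (ha : a ∈ Set.Ico (0:ℝ) 1) (hε : ε ∈ Set.Ioo (0:ℝ) 1)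
    (b : ℝ) (hb : b = Real.sqrt (1 - a^2))
    (F : ℂ × ℂ → ℂ)
    (hF : ∀ p : ℂ × ℂ, F p =
      ((p.1^2 + 2*(b:ℂ)*p.2) / (2 - (a:ℂ)^2)) /
        ((1 - ((ε:ℂ)^2 / (2 - (a:ℂ)^2)^2) * ((a:ℂ)^2*p.2 - (b:ℂ)*p.1^2)^2) ^ ((1:ℂ)/2)) ) :
    DifferentiableOn ℂ F unitBall2 ∧
    Set.MapsTo F unitBall2 (Metric.ball (0:ℂ) 1) := by
  obtain ⟨ha0, ha1⟩ := ha
  obtain ⟨hε0, hε1⟩ := hε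
  have hb2 : b^2 = 1 - a^2 := by rw [hb]; exact Real.sq_sqrt (by nlinarith)
  have hb0 : 0 ≤ b := hb ▸ Real.sqrt_nonneg _
  have h2 : (0:ℝ) < 2 - a^2 := by nlinarith
  have hC2 : (2 - (a:ℂ)^2) = ((2 - a^2 : ℝ) : ℂ) := by push_cast; ring
  -- the pointwise facts
  have main : ∀ p ∈ unitBall2,
      0 < (1 - ((ε:ℂ)^2 / (2 - (a:ℂ)^2)^2) * ((a:ℂ)^2*p.2 - (b:ℂ)*p.1^2)^2).re ∧
      (1 - ((ε:ℂ)^2 / (2 - (a:ℂ)^2)^2) * ((a:ℂ)^2*p.2 - (b:ℂ)*p.1^2)^2) ≠ 0 ∧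
      ‖F p‖ < 1 := by
    intro p hp
    have hzw : ‖p.1‖ ^ 2 + ‖p.2‖ ^ 2 < 1 := hp
    set z := p.1
    set w := p.2
    set N := ‖z^2 + 2*(b:ℂ)*w‖ with hNdef
    set D := ‖(a:ℂ)^2*w - (b:ℂ)*z^2‖ with hDdef
    set u : ℂ := ((ε:ℂ)^2 / (2 - (a:ℂ)^2)^2) * ((a:ℂ)^2*w - (b:ℂ)*z^2)^2 with hu
    have hkey : N^2 + ε^2 * D^2 < (2 - a^2)^2 :=
      key_bound a ε b ha0 ha1 hε0 hε1 hb0 hb2 z w hzw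
    have habsu : ‖u‖ = ε^2 * D^2 / (2-a^2)^2 := by
      rw [hu, norm_mul, norm_div, norm_pow, norm_pow, norm_pow, hC2,
        Complex.norm_real, Real.norm_eq_abs, Complex.norm_real, Real.norm_eq_abs, abs_of_pos h2, abs_of_pos hε0]
      ring
    have hD0 : 0 ≤ D := norm_nonneg _
    have hN0 : 0 ≤ N := norm_nonneg _
    have husmall : ‖u‖ < 1 := by
      rw [habsu, div_lt_one (by positivity)]; nlinarith
    have h1u : 1 - ‖u‖ ≤ ‖1 - u‖ := by
      have h := norm_add_le (1 - u) u
      simp only [sub_add_cancel, norm_one] at h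
      linarith
    have hA : 0 < ‖1 - u‖ := by linarith
    have hne : (1 : ℂ) - u ≠ 0 := by
      intro h; rw [h] at hA; simp at hA
    have hre : 0 < ((1:ℂ) - u).re := by
      have := Complex.re_le_norm u
      have habs := norm_nonneg u
      simp only [Complex.sub_re, Complex.one_re]
      linarith [husmall, this]
    refine ⟨hre, hne, ?_⟩
    rw [hF p, norm_div, norm_div]
    have hden : ‖(1 - u) ^ ((1:ℂ)/2)‖ = ‖1-u‖ ^ (1/2:ℝ) := by
      rw [Complex.norm_cpow_of_ne_zero hne]
      norm_num
    rw [hden, hC2, Complex.norm_real, Real.norm_eq_abs, abs_of_pos h2, ← Real.sqrt_eq_rpow,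
      div_lt_one (Real.sqrt_pos.2 hA)]
    have hfin : (N/(2-a^2))^2 < ‖1-u‖ := by
      rw [div_pow]
      have hsum : N^2/(2-a^2)^2 + ε^2*D^2/(2-a^2)^2 < 1 := by
        rw [← add_div, div_lt_one (by positivity)]; exact hkey
      have h1u' := h1u
      rw [habsu] at h1u'
      linarith
    exact (Real.lt_sqrt (by positivity)).2 hfin
  constructor
  · have hFeq : F = fun p : ℂ × ℂ =>
        ((p.1^2 + 2*(b:ℂ)*p.2) / (2 - (a:ℂ)^2)) /
          ((1 - ((ε:ℂ)^2 / (2 - (a:ℂ)^2)^2) * ((a:ℂ)^2*p.2 - (b:ℂ)*p.1^2)^2) ^ ((1:ℂ)/2)) :=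
      funext hF
    rw [hFeq]
    intro p hp
    obtain ⟨hre, hne, -⟩ := main p hp
    apply DifferentiableAt.differentiableWithinAt
    simp only [div_eq_mul_inv] at hre hne ⊢
    apply DifferentiableAt.mul
    · fun_prop
    · apply DifferentiableAt.inv
      · exact DifferentiableAt.cpow (by fun_prop) (differentiableAt_const _)
          (Complex.mem_slitPlane_iff.2 (Or.inl hre))
      · rw [Complex.cpow_def_of_ne_zero hne]; exact Complex.exp_ne_zero _
  · intro p hp
    obtain ⟨-, -, habs⟩ := main p hp
    simpa [Metric.mem_ball, Complex.dist_eq] using habs
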